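/- Approximate projection norm bound: under the hypotheses that ‖w - P_Γ w‖₂ ≤ η ‖w - P_R w‖₂ with η ≥ 1 and P_Γ, P_R orthogonal projections, one has ‖P_R w‖₂ ≤ ‖P_Γ w‖₂ + √((η² - 1)/η²) ‖w - P_Γ w‖₂. -/

import Mathlib

open RealInnerProductSpace

lemma proj_pythagoras {n : ℕ} (K : Submodule ℝ (EuclideanSpace ℝ (Fin n)))
    (w : EuclideanSpace ℝ (Fin n)) :
    ‖(Submodule.orthogonalProjectionOnto K w : EuclideanSpace ℝ (Fin n))‖ ^ 2
      + ‖w - (Submodule.orthogonalProjectionOnto K w : EuclideanSpace ℝ (Fin n))‖ ^ 2 = ‖w‖ ^ 2 := by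
  have horth : (inner ℝ (Submodule.orthogonalProjectionOnto K w : EuclideanSpace ℝ (Fin n))
      (w - (Submodule.orthogonalProjectionOnto K w : EuclideanSpace ℝ (Fin n))) : ℝ) = 0 := by
    rw [real_inner_comm]
    exact Submodule.starProjection_inner_eq_zero w _ (Submodule.orthogonalProjectionOnto K w).2
  have := norm_add_sq_real (Submodule.orthogonalProjectionOnto K w : EuclideanSpace ℝ (Fin n))
    (w - (Submodule.orthogonalProjectionOnto K w : EuclideanSpace ℝ (Fin n)))
  rw [horth, add_sub_cancel] at this
  linarith

theorem approx_projection_norm_bound {n : ℕ}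
    (Γ R : Submodule ℝ (EuclideanSpace ℝ (Fin n)))
    (w : EuclideanSpace ℝ (Fin n)) (η : ℝ) (hη : 1 ≤ η)
    (h : ‖w - (Submodule.orthogonalProjectionOnto Γ w : EuclideanSpace ℝ (Fin n))‖
        ≤ η * ‖w - (Submodule.orthogonalProjectionOnto R w : EuclideanSpace ℝ (Fin n))‖) :
    ‖(Submodule.orthogonalProjectionOnto R w : EuclideanSpace ℝ (Fin n))‖
      ≤ ‖(Submodule.orthogonalProjectionOnto Γ w : EuclideanSpace ℝ (Fin n))‖
        + Real.sqrt ((η ^ 2 - 1) / η ^ 2) *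
          ‖w - (Submodule.orthogonalProjectionOnto Γ w : EuclideanSpace ℝ (Fin n))‖ := by
  set a := ‖(Submodule.orthogonalProjectionOnto Γ w : EuclideanSpace ℝ (Fin n))‖ with ha
  set b := ‖(Submodule.orthogonalProjectionOnto R w : EuclideanSpace ℝ (Fin n))‖ with hb
  set c := ‖w - (Submodule.orthogonalProjectionOnto Γ w : EuclideanSpace ℝ (Fin n))‖ with hc
  set d := ‖w - (Submodule.orthogonalProjectionOnto R w : EuclideanSpace ℝ (Fin n))‖ with hd
  have hηpos : (0:ℝ) < η := lt_of_lt_of_le one_pos hη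
  have h1 := proj_pythagoras Γ w
  have h2 := proj_pythagoras R w
  have ha0 : 0 ≤ a := norm_nonneg _
  have hb0 : 0 ≤ b := norm_nonneg _
  have hc0 : 0 ≤ c := norm_nonneg _
  have hd0 : 0 ≤ d := norm_nonneg _
  set t := (η ^ 2 - 1) / η ^ 2 with ht
  have ht0 : 0 ≤ t := by
    apply div_nonneg _ (sq_nonneg η)
    nlinarith
  have hst : Real.sqrt t ^ 2 = t := Real.sq_sqrt ht0
  -- d² ≥ c²/η², i.e. η² d² ≥ c²
  have hd2 : c ^ 2 ≤ η ^ 2 * d ^ 2 := by nlinarith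
  have hb2 : b ^ 2 ≤ a ^ 2 + t * c ^ 2 := by
    have hx : η ^ 2 * b ^ 2 ≤ η ^ 2 * a ^ 2 + (η ^ 2 - 1) * c ^ 2 := by nlinarith
    rw [ht, div_mul_eq_mul_div, ← sub_le_iff_le_add', le_div_iff₀ (by positivity)]
    nlinarith
  have hkey : b ^ 2 ≤ (a + Real.sqrt t * c) ^ 2 := by
    have hs0 : 0 ≤ Real.sqrt t := Real.sqrt_nonneg _
    nlinarith [hst, mul_nonneg ha0 (mul_nonneg hs0 hc0)]
  have := Real.sqrt_le_sqrt hkey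
  rwa [Real.sqrt_sq hb0, Real.sqrt_sq (by positivity)] at this
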